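/- Let μ be a Borel probability measure and g a positive measurable function such that g^s is μ-integrable for every s > 0 and μ(g^s) > 0 for every s > 0. Then the map p ↦ (p/(2(p−1)²)) · [ μ(g²) − μ(g^{2/p})^p · (μ(g²)/μ(g^{2/p})^p)^{(2/p)−1} ] is nonincreasing on (1,∞). -/

import Mathlib

open MeasureTheory

-- L2: the elementary convexity lemma
lemma aux_exp_div {a b s : ℝ} (ha : 0 < a) (hab : a ≤ b) :
    (1 - Real.exp (b * s)) / b ≤ (1 - Real.exp (a * s)) / a := by
  have hb : 0 < b := lt_of_lt_of_le ha hab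
  rw [div_le_div_iff₀ hb ha]
  have hlam : a * s = (1 - a / b) • (0 : ℝ) + (a / b) • (b * s) := by
    field_simp
    simp only [smul_eq_mul]
    field_simp
    ring
  have hconv := convexOn_exp.2 (Set.mem_univ (0:ℝ)) (Set.mem_univ (b*s))
    (show (0:ℝ) ≤ 1 - a/b by rw [sub_nonneg]; exact div_le_one_of_le₀ hab hb.le)
    (show (0:ℝ) ≤ a/b by positivity) (by ring)
  rw [← hlam, Real.exp_zero] at hconv
  simp only [smul_eq_mul, mul_one] at hconv
  have h2 : b * Real.exp (a*s) ≤ b - a + a * Real.exp (b*s) := by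
    have h3 := mul_le_mul_of_nonneg_left hconv hb.le
    have h4 : b * (1 - a/b + a/b * Real.exp (b*s)) = b - a + a * Real.exp (b*s) := by
      field_simp
    linarith [h3, h4.le, h4.ge]
  nlinarith [h2]

-- Memℒp auxiliary
lemma aux_memℒp {Ω : Type*} [MeasurableSpace Ω] {μ : Measure Ω} {f : Ω → ℝ}
    (hfpos : ∀ x, 0 < f x) (hint : Integrable f μ) {θ : ℝ} (hθ : 0 < θ) :
    MemLp (fun x => f x ^ θ) (ENNReal.ofReal (1/θ)) μ := by
  have h := (memLp_norm_rpow_iff (q := ENNReal.ofReal θ) (p := 1) hint.1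
    (by simp [ENNReal.ofReal_eq_zero, not_le, hθ]) ENNReal.ofReal_ne_top).2
    (memLp_one_iff_integrable.2 hint)
  have heq : (fun x : Ω => ‖f x‖ ^ (ENNReal.ofReal θ).toReal) = fun x => f x ^ θ := by
    funext x
    rw [Real.norm_of_nonneg (hfpos x).le, ENNReal.toReal_ofReal hθ.le]
  rw [heq] at h
  rw [ENNReal.ofReal_div_of_pos hθ, ENNReal.ofReal_one]
  exact h


lemma aux_holder {Ω : Type*} [MeasurableSpace Ω] {μ : Measure Ω} {g : Ω → ℝ}
    (hgpos : ∀ x, 0 < g x) {r1 r2 θ : ℝ}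
    (h1 : Integrable (fun x => g x ^ r1) μ) (h2 : Integrable (fun x => g x ^ r2) μ)
    (hθ0 : 0 < θ) (hθ1 : θ < 1) :
    ∫ x, g x ^ (θ * r1 + (1 - θ) * r2) ∂μ ≤
      (∫ x, g x ^ r1 ∂μ) ^ θ * (∫ x, g x ^ r2 ∂μ) ^ (1 - θ) := by
  have hθ1' : (0:ℝ) < 1 - θ := by linarith
  have hpq : Real.HolderConjugate (1/θ) (1/(1-θ)) :=
    Real.holderConjugate_one_div hθ0 hθ1' (by ring)
  have m1 : MemLp (fun x => (g x ^ r1) ^ θ) (ENNReal.ofReal (1/θ)) μ :=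
    aux_memℒp (fun x => Real.rpow_pos_of_pos (hgpos x) r1) h1 hθ0
  have m2 : MemLp (fun x => (g x ^ r2) ^ (1-θ)) (ENNReal.ofReal (1/(1-θ))) μ :=
    aux_memℒp (fun x => Real.rpow_pos_of_pos (hgpos x) r2) h2 hθ1'
  have key := integral_mul_le_Lp_mul_Lq_of_nonneg hpq
    (Filter.Eventually.of_forall fun x =>
      (Real.rpow_pos_of_pos (Real.rpow_pos_of_pos (hgpos x) r1) θ).le)
    (Filter.Eventually.of_forall fun x =>
      (Real.rpow_pos_of_pos (Real.rpow_pos_of_pos (hgpos x) r2) (1-θ)).le)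
    m1 m2
  have e1 : ∀ x : Ω, ((g x ^ r1) ^ θ) ^ (1/θ) = g x ^ r1 := fun x => by
    rw [← Real.rpow_mul (Real.rpow_pos_of_pos (hgpos x) r1).le, mul_one_div,
      div_self hθ0.ne', Real.rpow_one]
  have e2 : ∀ x : Ω, ((g x ^ r2) ^ (1-θ)) ^ (1/(1-θ)) = g x ^ r2 := fun x => by
    rw [← Real.rpow_mul (Real.rpow_pos_of_pos (hgpos x) r2).le, mul_one_div,
      div_self hθ1'.ne', Real.rpow_one]
  have e0 : ∀ x : Ω, g x ^ (θ * r1 + (1 - θ) * r2) = (g x ^ r1) ^ θ * (g x ^ r2) ^ (1-θ) :=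
    fun x => by
      rw [Real.rpow_add (hgpos x), ← Real.rpow_mul (hgpos x).le, ← Real.rpow_mul (hgpos x).le,
        mul_comm r1 θ, mul_comm r2 (1-θ)]
  simp only [e1, e2, one_div_one_div] at key
  calc ∫ x, g x ^ (θ * r1 + (1 - θ) * r2) ∂μ
      = ∫ x, (g x ^ r1) ^ θ * (g x ^ r2) ^ (1-θ) ∂μ := integral_congr_ae
        (Filter.Eventually.of_forall e0)
    _ ≤ (∫ x, g x ^ r1 ∂μ) ^ θ * (∫ x, g x ^ r2 ∂μ) ^ (1 - θ) := key


/-- Let `μ` be a Borel probability measure and `g` a positive measurable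
function such that `g^s` is `μ`-integrable and `μ(g^s) > 0` for every `s > 0`.  Then the map
`p ↦ (p/(2(p−1)²)) · [ μ(g²) − μ(g^{2/p})^p · (μ(g²)/μ(g^{2/p})^p)^{2/p−1} ]`
is nonincreasing on `(1,∞)`. -/
theorem refined_phi_entropy_functional_antitone
    {Ω : Type*} [MeasurableSpace Ω] (μ : Measure Ω) [IsProbabilityMeasure μ]
    (g : Ω → ℝ) (hg : Measurable g) (hgpos : ∀ x, 0 < g x)
    (hint : ∀ s : ℝ, 0 < s → Integrable (fun x => g x ^ s) μ)
    (hpos : ∀ s : ℝ, 0 < s → 0 < ∫ x, g x ^ s ∂μ) :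
    AntitoneOn
      (fun p : ℝ =>
        p / (2 * (p - 1) ^ 2) *
          ((∫ x, g x ^ (2 : ℝ) ∂μ) - (∫ x, g x ^ (2 / p) ∂μ) ^ p *
            ((∫ x, g x ^ (2 : ℝ) ∂μ) / (∫ x, g x ^ (2 / p) ∂μ) ^ p) ^ (2 / p - 1)))
      (Set.Ioi (1 : ℝ)) := by
  intro p hp q hq hpq
  simp only [Set.mem_Ioi] at hp hq
  rcases eq_or_lt_of_le hpq with rfl | hplt
  · exact le_refl _
  simp only
  set A := ∫ x, g x ^ (2:ℝ) ∂μ with hAdef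
  set Bp := ∫ x, g x ^ (2/p) ∂μ with hBpdef
  set Bq := ∫ x, g x ^ (2/q) ∂μ with hBqdef
  have hA : 0 < A := hpos 2 two_pos
  have hp0 : (0:ℝ) < p := by linarith
  have hq0 : (0:ℝ) < q := by linarith
  have hp1 : (0:ℝ) < p - 1 := by linarith
  have hq1 : (0:ℝ) < q - 1 := by linarith
  have hBp : 0 < Bp := hpos _ (by positivity)
  have hBq : 0 < Bq := hpos _ (by positivity)
  set a := Real.log A with hadef
  -- rewriting lemma
  have hrw : ∀ r B : ℝ, 1 < r → 0 < B →
      r / (2 * (r - 1) ^ 2) * (A - B ^ r * (A / B ^ r) ^ (2/r - 1))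
        = A * (r / (2 * (r - 1) ^ 2) *
            (1 - Real.exp ((2*r - 2) * Real.log B + (2/r - 2) * a))) := by
    intro r B hr hB
    have hr0 : (0:ℝ) < r := by linarith
    have hBr : (0:ℝ) < B ^ r := Real.rpow_pos_of_pos hB r
    have key : B ^ r * (A / B ^ r) ^ (2/r - 1)
        = A * Real.exp ((2*r - 2) * Real.log B + (2/r - 2) * a) := by
      rw [Real.rpow_def_of_pos (div_pos hA hBr), Real.log_div hA.ne' hBr.ne',
        Real.log_rpow hB, Real.rpow_def_of_pos hB, ← Real.exp_add]
      nth_rewrite 2 [← Real.exp_log hA]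
      rw [← Real.exp_add, ← hadef]
      congr 1
      field_simp
      ring
    rw [key]
    ring
  rw [hrw p Bp hp hBp, hrw q Bq hq hBq]
  -- abbreviations
  set bp := Real.log Bp with hbpdef
  set bq := Real.log Bq with hbqdef
  set s := q * bq - a with hsdef
  set αp := 2*(p-1)^2/(p*(q-1)) with hαpdef
  set αq := 2*(q-1)/q with hαqdef
  have hαp0 : 0 < αp := by rw [hαpdef]; positivity
  have hαq0 : 0 < αq := by rw [hαqdef]; positivity
  have hαpq : αp ≤ αq := by
    rw [hαpdef, hαqdef, div_le_div_iff₀ (by positivity) (by positivity)]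
    nlinarith [mul_pos (sub_pos.2 hplt) (show (0:ℝ) < p*q - 1 by nlinarith)]
  -- Step A : exponent for q
  have hEq : (2*q - 2) * bq + (2/q - 2) * a = αq * s := by
    rw [hαqdef, hsdef]
    field_simp
    ring
  -- Step B : exponent bound for p via Hölder
  have hEp : (2*p - 2) * bp + (2/p - 2) * a ≤ αp * s := by
    set θ := (p-1)*q/(p*(q-1)) with hθdef
    have hθ0 : 0 < θ := by rw [hθdef]; positivity
    have hθ1 : θ < 1 := by
      rw [hθdef, div_lt_one (by positivity)]
      nlinarith
    have hH := aux_holder hgpos (hint (2/q) (by positivity)) (hint 2 two_pos) hθ0 hθ1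
    have hcomb : θ * (2/q) + (1 - θ) * 2 = 2/p := by
      rw [hθdef]
      field_simp
      ring
    rw [hcomb, ← hBpdef, ← hBqdef, ← hAdef] at hH
    have hlog : bp ≤ θ * bq + (1 - θ) * a := by
      have h1 := Real.log_le_log hBp hH
      rw [Real.log_mul (Real.rpow_pos_of_pos hBq θ).ne' (Real.rpow_pos_of_pos hA (1-θ)).ne',
        Real.log_rpow hBq, Real.log_rpow hA, ← hbqdef, ← hadef, ← hbpdef] at h1
      exact h1
    have hkey : (2*p - 2) * (θ * bq + (1 - θ) * a) + (2/p - 2) * a = αp * s := by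
      rw [hθdef, hαpdef, hsdef]
      field_simp
      ring
    have h2 : (2*p - 2) * bp ≤ (2*p - 2) * (θ * bq + (1 - θ) * a) :=
      mul_le_mul_of_nonneg_left hlog (by linarith)
    linarith
  -- Step C : convexity comparison
  have hC : q / (2 * (q - 1) ^ 2) * (1 - Real.exp (αq * s))
      ≤ p / (2 * (p - 1) ^ 2) * (1 - Real.exp (αp * s)) := by
    have h3 := mul_le_mul_of_nonneg_left (aux_exp_div hαp0 hαpq (s := s))
      (by positivity : (0:ℝ) ≤ 1/(q-1))
    have idq : q / (2 * (q - 1) ^ 2) * (1 - Real.exp (αq * s))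
        = 1/(q-1) * ((1 - Real.exp (αq * s)) / αq) := by
      rw [hαqdef]; field_simp
    have idp : p / (2 * (p - 1) ^ 2) * (1 - Real.exp (αp * s))
        = 1/(q-1) * ((1 - Real.exp (αp * s)) / αp) := by
      rw [hαpdef]; field_simp
    rw [idq, idp]
    exact h3
  -- Step D : monotonicity of exp
  have hD : p / (2 * (p - 1) ^ 2) * (1 - Real.exp (αp * s))
      ≤ p / (2 * (p - 1) ^ 2) * (1 - Real.exp ((2*p - 2) * bp + (2/p - 2) * a)) := by
    have := Real.exp_le_exp.2 hEp
    have hcp : (0:ℝ) ≤ p / (2 * (p - 1) ^ 2) := by positivity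
    apply mul_le_mul_of_nonneg_left _ hcp
    linarith
  rw [hEq] at *
  apply mul_le_mul_of_nonneg_left _ hA.le
  calc q / (2 * (q - 1) ^ 2) * (1 - Real.exp (αq * s))
      ≤ p / (2 * (p - 1) ^ 2) * (1 - Real.exp (αp * s)) := hC
    _ ≤ _ := hD
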